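/- Let Δ⁺ and Δ⁻ be convex subsets of ℝⁿ with Δ⁺ ⊆ Δ⁻, and let C be a connected component of the set-theoretic difference Δ⁻ \ Δ⁺ (with its subspace topology). Then the union C ∪ Δ⁺ is a convex set. -/

import Mathlib

/-- Let `Δp` and `Δm` be convex subsets of `ℝⁿ` with `Δp ⊆ Δm`, and let `C` be the connected
component of the set-theoretic difference `Δm \ Δp` (with its subspace topology) containing
a point `x`.  Then the union `C ∪ Δp` is a convex set.
(Convexity assertion of Proposition 13 of the paper.) -/
theorem union_component_convex {n : ℕ} (Δp Δm : Set (Fin n → ℝ))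
    (hΔp : Convex ℝ Δp) (hΔm : Convex ℝ Δm) (hsub : Δp ⊆ Δm)
    (x : Fin n → ℝ) (hx : x ∈ Δm \ Δp) :
    Convex ℝ (connectedComponentIn (Δm \ Δp) x ∪ Δp) := by
  set F := Δm \ Δp with hF
  set C := connectedComponentIn F x with hCdef
  intro a ha b hb u v hu hv huv
  by_cases hy : u • a + v • b ∈ Δp
  · exact Or.inr hy
  left
  have haM : a ∈ Δm := ha.elim (fun h => (connectedComponentIn_subset F x h).1) (fun h => hsub h)
  have hbM : b ∈ Δm := hb.elim (fun h => (connectedComponentIn_subset F x h).1) (fun h => hsub h)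
  set γ : ℝ → (Fin n → ℝ) := fun s => (1 - s) • a + s • b with hγ
  have hγcont : Continuous γ := by
    apply Continuous.add <;> fun_prop
  have hγ0 : γ 0 = a := by simp [hγ]
  have hγ1 : γ 1 = b := by simp [hγ]
  have hyv : u • a + v • b = γ v := by
    have : u = 1 - v := by linarith
    simp [hγ, this]
  rw [hyv] at hy ⊢
  have hγM : ∀ s ∈ Set.Icc (0:ℝ) 1, γ s ∈ Δm := fun s hs =>
    hΔm haM hbM (by linarith [hs.2]) hs.1 (by ring)
  have hv1 : v ≤ 1 := by linarith
  -- the set of parameters landing in Δp is convex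
  have hT : Convex ℝ {s : ℝ | γ s ∈ Δp} := by
    have := hΔp.affine_preimage (AffineMap.lineMap a b)
    convert this using 2 with s
    exacts [rfl, rfl, rfl, by ext s; simp [hγ, AffineMap.lineMap_apply_module, Set.preimage]]
  -- dichotomy
  by_cases hleft : ∃ s ∈ Set.Icc (0:ℝ) v, γ s ∈ Δp
  · -- then right part of the segment avoids Δp
    have hright : ∀ s ∈ Set.Icc v 1, γ s ∉ Δp := by
      intro s hs hmem
      obtain ⟨s₁, hs₁, hmem₁⟩ := hleft
      have : v ∈ {s : ℝ | γ s ∈ Δp} := by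
        rcases eq_or_lt_of_le hs₁.2 with h | h
        · exact h ▸ hmem₁
        · rcases eq_or_lt_of_le hs.1 with h2 | h2
          · exact h2 ▸ hmem
          · exact hT.segment_subset hmem₁ hmem
              (by rw [segment_eq_Icc (le_of_lt (lt_trans h h2))]; exact ⟨hs₁.2, hs.1⟩)
      exact hy this
    -- b ∈ C, and γ '' Icc v 1 is connected in F containing b and γ v
    have hbC : b ∈ C := by
      rcases hb with h | h
      · exact h
      · exact absurd h (by simpa [hγ1] using hright 1 ⟨hv1, le_refl 1⟩)
    set K := γ '' Set.Icc v 1 with hK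
    have hKconn : IsPreconnected K := (isPreconnected_Icc).image _ hγcont.continuousOn
    have hKF : K ⊆ F := by
      rintro _ ⟨s, hs, rfl⟩
      exact ⟨hγM s ⟨le_trans hv hs.1, hs.2⟩, hright s hs⟩
    have hbK : b ∈ K := ⟨1, ⟨hv1, le_refl 1⟩, hγ1⟩
    have hKC : K ⊆ connectedComponentIn F b :=
      hKconn.subset_connectedComponentIn hbK hKF
    show γ v ∈ connectedComponentIn F x
    rw [connectedComponentIn_eq hbC]
    exact hKC ⟨v, ⟨le_refl v, hv1⟩, rfl⟩
  · push_neg at hleft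
    have haC : a ∈ C := by
      rcases ha with h | h
      · exact h
      · exact absurd h (by simpa [hγ0] using hleft 0 ⟨le_refl 0, hv⟩)
    set K := γ '' Set.Icc 0 v with hK
    have hKconn : IsPreconnected K := (isPreconnected_Icc).image _ hγcont.continuousOn
    have hKF : K ⊆ F := by
      rintro _ ⟨s, hs, rfl⟩
      exact ⟨hγM s ⟨hs.1, le_trans hs.2 hv1⟩, hleft s hs⟩
    have haK : a ∈ K := ⟨0, ⟨le_refl 0, hv⟩, hγ0⟩
    have hKC : K ⊆ connectedComponentIn F a :=
      hKconn.subset_connectedComponentIn haK hKF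
    show γ v ∈ connectedComponentIn F x
    rw [connectedComponentIn_eq haC]
    exact hKC ⟨v, ⟨hv, le_refl v⟩, rfl⟩
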